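/- In a trace monoid M(Σ,I), any two traces x, y with a common upper bound for the left-divisibility order have a least upper bound x ∨ y, and any two traces have a greatest lower bound x ∧ y. For cliques x, y (viewed as subsets of Σ), x ∧ y is the clique corresponding to the set intersection x ∩ y. -/

import Mathlib

open scoped Classical

section TracePre

variable {A : Type*}

/-- The elementary swap relation from an independence relation. -/
def swapRel (I : A → A → Prop) : FreeMonoid A → FreeMonoid A → Prop :=
  fun x y => ∃ a b, I a b ∧ x = FreeMonoid.of a * FreeMonoid.of b ∧
    y = FreeMonoid.of b * FreeMonoid.of a

/-- The congruence generated by the commutations. -/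
def traceCon (I : A → A → Prop) : Con (FreeMonoid A) := conGen (swapRel I)

/-- The trace monoid `M(A, I)`. -/
abbrev TraceMonoid (A : Type*) (I : A → A → Prop) := (traceCon I).Quotient

/-- Image of a letter in the trace monoid. -/
def trOf (I : A → A → Prop) (a : A) : TraceMonoid A I := (traceCon I).mk' (FreeMonoid.of a)

theorem traceCon_le_ker {M : Type*} [CommMonoid M] {I : A → A → Prop}
    (φ : FreeMonoid A →* M) : traceCon I ≤ Con.ker φ := by
  apply Con.conGen_le.2
  rintro x y ⟨a, b, _, rfl, rfl⟩
  simp [Con.ker_rel, map_mul, mul_comm]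

/-- Length of a trace. -/
noncomputable def trLen {I : A → A → Prop} (x : TraceMonoid A I) : ℕ :=
  Multiplicative.toAdd
    ((Con.lift (traceCon I) (FreeMonoid.lift fun _ => Multiplicative.ofAdd (1 : ℕ))
      (traceCon_le_ker _)) x)

/-- Number of occurrences of the letter `a` in a trace. -/
noncomputable def trCount {I : A → A → Prop} (a : A) (x : TraceMonoid A I) : ℕ :=
  Multiplicative.toAdd
    ((Con.lift (traceCon I)
      (FreeMonoid.lift fun b => Multiplicative.ofAdd (if b = a then (1 : ℕ) else 0))
      (traceCon_le_ker _)) x)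

/-- Lists of pairwise distinct, pairwise independent letters. -/
def IsCliqueList (I : A → A → Prop) (l : List A) : Prop :=
  l.Pairwise fun a b => a ≠ b ∧ I a b

/-- The trace associated with a list of letters. -/
def listProd (I : A → A → Prop) (l : List A) : TraceMonoid A I := (l.map (trOf I)).prod

/-- A clique of the trace monoid. -/
def IsClique (I : A → A → Prop) (x : TraceMonoid A I) : Prop :=
  ∃ l, IsCliqueList I l ∧ x = listProd I l

/-- The trace associated with a finite set of letters. -/
noncomputable def fprod (I : A → A → Prop) (c : Finset A) : TraceMonoid A I :=
  listProd I c.toList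

/-- Normal pairs of cliques, cliques being represented by finite sets of letters. -/
def NormalF (I : A → A → Prop) (c d : Finset A) : Prop :=
  ∀ b ∈ d, ∃ a ∈ c, (¬ I a b ∨ a = b)

/-- Greatest lower bound for left divisibility. -/
def IsGlbDvd {M : Type*} [Monoid M] (x y g : M) : Prop :=
  g ∣ x ∧ g ∣ y ∧ ∀ w, w ∣ x → w ∣ y → w ∣ g

/-- Least upper bound for left divisibility. -/
def IsLubDvd {M : Type*} [Monoid M] (x y z : M) : Prop :=
  x ∣ z ∧ y ∣ z ∧ ∀ w, x ∣ w → y ∣ w → z ∣ w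

end TracePre

section CSPre

variable {A X : Type*}

/-- A concurrent system: a right action of a trace monoid on `X ∪ {⊥}`,
`⊥` being encoded by `none`. -/
structure CS (A : Type*) (I : A → A → Prop) (X : Type*) where
  act : Option X → TraceMonoid A I → Option X
  act_one : ∀ s, act s 1 = s
  act_mul : ∀ s x y, act s (x * y) = act (act s x) y
  act_bot : ∀ x, act none x = none

variable {I : A → A → Prop}

/-- The letter `a` is enabled at state `α`. -/
def CS.Enabled (S : CS A I X) (α : X) (a : A) : Prop := S.act (some α) (trOf I a) ≠ none

/-- The set of executions starting from `α`. -/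
def CS.MSet (S : CS A I X) (α : X) : Set (TraceMonoid A I) :=
  {x | S.act (some α) x ≠ none}

/-- A deterministic concurrent system: any two letters enabled at a common state
commute. -/
def CS.Deterministic (S : CS A I X) : Prop :=
  ∀ (α : X) (a b : A), a ≠ b → S.Enabled α a → S.Enabled α b → I a b

/-- The finite set of letters enabled at an extended state. -/
noncomputable def CS.enabledFinset [Fintype A] (S : CS A I X) (s : Option X) : Finset A :=
  Finset.univ.filter fun a => S.act s (trOf I a) ≠ none

/-- A generalised execution from `α`, as an infinite normal sequence of cliques
all of whose finite prefixes are executions. -/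
def CS.IsGenExec (S : CS A I X) (α : X) (c : ℕ → Finset A) : Prop :=
  (∀ i, (↑(c i) : Set A).Pairwise I) ∧ (∀ i, NormalF I (c i) (c (i + 1))) ∧
    ∀ k, S.act (some α) (((List.range k).map fun i => fprod I (c i)).prod) ≠ none

/-- An infinite execution from `α`: a generalised execution with all cliques nonempty. -/
def CS.IsInfExec (S : CS A I X) (α : X) (c : ℕ → Finset A) : Prop :=
  S.IsGenExec α c ∧ ∀ i, c i ≠ ∅

end CSPre

section Stmt5Aux

variable {A : Type*} {I : A → A → Prop}

/-- `mkL I l` is the trace represented by the word `l`. -/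
def mkL (I : A → A → Prop) (l : List A) : TraceMonoid A I :=
  (traceCon I).mk' (FreeMonoid.ofList l)

theorem mkL_nil : mkL I ([] : List A) = 1 := by
  simp [mkL, FreeMonoid.ofList_nil]

theorem mkL_append (l₁ l₂ : List A) : mkL I (l₁ ++ l₂) = mkL I l₁ * mkL I l₂ := by
  simp [mkL, FreeMonoid.ofList_append]

theorem trOf_eq_mkL (a : A) : trOf I a = mkL I [a] := rfl

theorem mkL_cons (a : A) (l : List A) : mkL I (a :: l) = trOf I a * mkL I l := by
  simp [mkL, FreeMonoid.ofList_cons, trOf]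

theorem mkL_surjective (x : TraceMonoid A I) : ∃ l, x = mkL I l := by
  obtain ⟨w, hw⟩ := Con.mk'_surjective (c := traceCon I) x
  exact ⟨FreeMonoid.toList w, by simp [mkL, FreeMonoid.ofList_toList, hw]⟩

theorem trOf_comm {a b : A} (hab : I a b) : trOf I a * trOf I b = trOf I b * trOf I a := by
  have : (traceCon I) (FreeMonoid.of a * FreeMonoid.of b) (FreeMonoid.of b * FreeMonoid.of a) :=
    ConGen.Rel.of _ _ ⟨a, b, hab, rfl, rfl⟩
  exact (Con.eq _).mpr this

/-- The projection onto words over letters satisfying `p`. -/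
def projW (p : A → Bool) : FreeMonoid A →* FreeMonoid A :=
  FreeMonoid.lift fun a => if p a then FreeMonoid.of a else 1

theorem projW_ofList (p : A → Bool) (l : List A) :
    projW p (FreeMonoid.ofList l) = FreeMonoid.ofList (l.filter p) := by
  induction l with
  | nil => rfl
  | cons a t ih =>
    rw [FreeMonoid.ofList_cons, map_mul, ih, List.filter_cons]
    by_cases h : p a
    · simp [projW, FreeMonoid.lift_eval_of, h, FreeMonoid.ofList_cons]
    · simp [projW, FreeMonoid.lift_eval_of, h]

/-- `p` blocks all commutations: no two independent letters both satisfy `p`. -/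
def Blocking (I : A → A → Prop) (p : A → Bool) : Prop :=
  ∀ ⦃c d⦄, I c d → p c → p d → False

theorem traceCon_le_ker_projW {p : A → Bool} (hp : Blocking I p) :
    traceCon I ≤ Con.ker (projW p) := by
  apply Con.conGen_le.2
  rintro x y ⟨a, b, hab, rfl, rfl⟩
  simp only [Con.ker_rel, map_mul]
  by_cases ha : p a
  · have hb : ¬ p b := fun hb => hp hab ha hb
    simp [projW, FreeMonoid.lift_eval_of, ha, hb]
  · simp [projW, FreeMonoid.lift_eval_of, ha]

/-- Projection of a trace, for a blocking predicate. -/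
def projT {p : A → Bool} (hp : Blocking I p) : TraceMonoid A I →* FreeMonoid A :=
  Con.lift _ (projW p) (traceCon_le_ker_projW hp)

/-- The list of letters of the projection of a trace. -/
def pT {p : A → Bool} (hp : Blocking I p) (x : TraceMonoid A I) : List A :=
  FreeMonoid.toList (projT hp x)

theorem pT_mkL {p : A → Bool} (hp : Blocking I p) (l : List A) :
    pT hp (mkL I l) = l.filter p := by
  simp [pT, projT, mkL, Con.lift_mk', projW_ofList, FreeMonoid.toList_ofList]

theorem pT_mul {p : A → Bool} (hp : Blocking I p) (x y : TraceMonoid A I) :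
    pT hp (x * y) = pT hp x ++ pT hp y := by
  simp [pT, map_mul, FreeMonoid.toList_mul]

theorem pT_trOf {p : A → Bool} (hp : Blocking I p) (a : A) :
    pT hp (trOf I a) = if p a then [a] else [] := by
  rw [trOf_eq_mkL, pT_mkL, List.filter_cons]
  by_cases h : p a <;> simp [h]

theorem pT_trOf_mul {p : A → Bool} (hp : Blocking I p) (a : A) (x : TraceMonoid A I) :
    pT hp (trOf I a * x) = (if p a then [a] else []) ++ pT hp x := by
  rw [pT_mul, pT_trOf]

end Stmt5Aux
section Stmt5Aux2

variable {A : Type*} {I : A → A → Prop}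

/-- All projections of `x` are prefixes of those of `z`. -/
def PrefAll (x z : TraceMonoid A I) : Prop :=
  ∀ ⦃p : A → Bool⦄ (hp : Blocking I p), pT hp x <+: pT hp z

theorem prefAll_of_dvd {x z : TraceMonoid A I} (h : x ∣ z) : PrefAll x z := by
  obtain ⟨c, rfl⟩ := h
  intro p hp
  rw [pT_mul]
  exact List.prefix_append _ _

theorem trLen_mkL (l : List A) : trLen (mkL I l) = l.length := by
  rw [mkL, trLen, Con.lift_mk', FreeMonoid.lift_ofList]
  induction l with
  | nil => rfl
  | cons a t ih => simpa [List.map_cons, List.prod_cons, toAdd_mul, ih] using Nat.add_comm 1 t.length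

theorem trLen_mul (x y : TraceMonoid A I) : trLen (x * y) = trLen x + trLen y := by
  simp [trLen, map_mul, toAdd_mul]

theorem eq_one_of_trLen_eq_zero {x : TraceMonoid A I} (h : trLen x = 0) : x = 1 := by
  obtain ⟨l, rfl⟩ := mkL_surjective x
  rw [trLen_mkL] at h
  rw [List.length_eq_zero_iff.mp h, mkL_nil]

theorem trLen_le_of_dvd {x z : TraceMonoid A I} (h : x ∣ z) : trLen x ≤ trLen z := by
  obtain ⟨c, rfl⟩ := h; rw [trLen_mul]; omega

theorem eq_of_dvd_of_len_le {x z : TraceMonoid A I} (h : x ∣ z) (hl : trLen z ≤ trLen x) :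
    x = z := by
  obtain ⟨c, rfl⟩ := h
  rw [trLen_mul] at hl
  have : c = 1 := eq_one_of_trLen_eq_zero (by omega)
  rw [this, mul_one]

theorem trDvd_antisymm {x z : TraceMonoid A I} (h : x ∣ z) (h' : z ∣ x) : x = z :=
  eq_of_dvd_of_len_le h (trLen_le_of_dvd h')

/-- Cancellation of a letter on the left. -/
theorem pT_eq_of_trOf_mul_eq {a : A} {s t : TraceMonoid A I}
    (h : trOf I a * s = trOf I a * t) ⦃p : A → Bool⦄ (hp : Blocking I p) :
    pT hp s = pT hp t := by
  have := congrArg (pT hp) h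
  rw [pT_trOf_mul, pT_trOf_mul] at this
  exact List.append_cancel_left this

/-- The blocking predicate associated with a dependent (or equal) pair of letters. -/
theorem blocking_pair (hsym : Symmetric I) (hirr : Irreflexive I) {a b : A}
    (hab : ¬ I a b) : Blocking I (fun c => decide (c = a ∨ c = b)) := by
  intro c d hcd hc hd
  simp only [decide_eq_true_eq] at hc hd
  rcases hc with rfl | rfl <;> rcases hd with rfl | rfl
  · exact hirr _ hcd
  · exact hab hcd
  · exact hab (hsym hcd)
  · exact hirr _ hcd

theorem exists_split_first {a : A} {l : List A} (h : a ∈ l) :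
    ∃ w₁ w₂, l = w₁ ++ a :: w₂ ∧ a ∉ w₁ := by
  induction l with
  | nil => cases h
  | cons b t ih =>
    by_cases hba : b = a
    · exact ⟨[], t, by rw [hba]; rfl, List.not_mem_nil⟩
    · have : a ∈ t := by
        rcases List.mem_cons.mp h with h' | h'
        · exact absurd h'.symm hba
        · exact h'
      obtain ⟨w₁, w₂, rfl, hw₁⟩ := ih this
      exact ⟨b :: w₁, w₂, rfl, by simp [hw₁, Ne.symm hba]⟩

theorem commute_front {a : A} {w₁ : List A} (h : ∀ b ∈ w₁, I b a) (w₂ : List A) :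
    mkL I (w₁ ++ a :: w₂) = trOf I a * mkL I (w₁ ++ w₂) := by
  induction w₁ with
  | nil => simp [mkL_cons]
  | cons b t ih =>
    have hba : I b a := h b (List.mem_cons_self)
    rw [List.cons_append, mkL_cons, ih (fun c hc => h c (List.mem_cons_of_mem _ hc)),
      ← mul_assoc, trOf_comm hba, mul_assoc, ← mkL_cons, List.cons_append]

theorem trOf_mul_comm {a : A} {w : List A} (h : ∀ b ∈ w, I a b) :
    trOf I a * mkL I w = mkL I w * trOf I a := by
  induction w with
  | nil => simp [mkL_nil]
  | cons b t ih =>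
    have hab : I a b := h b (List.mem_cons_self)
    rw [mkL_cons, ← mul_assoc, trOf_comm hab, mul_assoc,
      ih (fun c hc => h c (List.mem_cons_of_mem _ hc)), mul_assoc]

/-- If every pair-projection of `z` containing `a` starts with `a`, then `a` divides `z`. -/
theorem exists_of_head (hsym : Symmetric I) (hirr : Irreflexive I) {a : A}
    {z : TraceMonoid A I}
    (H : ∀ ⦃p : A → Bool⦄ (hp : Blocking I p), p a → [a] <+: pT hp z) :
    ∃ z', z = trOf I a * z' := by
  obtain ⟨w, rfl⟩ := mkL_surjective z
  have hpa : Blocking I (fun c => decide (c = a ∨ c = a)) :=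
    blocking_pair hsym hirr (fun h => hirr a h)
  have haw : a ∈ w := by
    have := H hpa (by simp)
    rw [pT_mkL] at this
    obtain ⟨s, hs⟩ := this
    have : a ∈ w.filter (fun c => decide (c = a ∨ c = a)) := by rw [← hs]; simp
    exact List.mem_of_mem_filter this
  obtain ⟨w₁, w₂, rfl, hw₁⟩ := exists_split_first haw
  have hind : ∀ b ∈ w₁, I b a := by
    intro b hb
    by_contra hIba
    have hab : ¬ I a b := fun h => hIba (hsym h)
    have hp := blocking_pair hsym hirr hab
    have hpre := H hp (by simp)
    rw [pT_mkL, List.filter_append] at hpre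
    have hbf : b ∈ w₁.filter (fun c => decide (c = a ∨ c = b)) := by
      rw [List.mem_filter]; exact ⟨hb, by simp⟩
    obtain ⟨e, r, her⟩ : ∃ e r, w₁.filter (fun c => decide (c = a ∨ c = b)) = e :: r := by
      cases hf : w₁.filter (fun c => decide (c = a ∨ c = b)) with
      | nil => rw [hf] at hbf; cases hbf
      | cons e r => exact ⟨e, r, rfl⟩
    rw [her] at hpre hbf
    have hea : e = a := by
      rcases hpre with ⟨s, hs⟩
      rw [List.cons_append] at hs
      exact (List.cons.injEq _ _ _ _ ▸ hs).1.symm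
    have : e ∈ w₁.filter (fun c => decide (c = a ∨ c = b)) := by
      rw [her]; exact List.mem_cons_self
    exact hw₁ (hea ▸ List.mem_of_mem_filter this)
  exact ⟨mkL I (w₁ ++ w₂), commute_front hind w₂⟩

end Stmt5Aux2
section Stmt5Aux3

variable {A : Type*} {I : A → A → Prop}

theorem dvd_of_prefAll (hsym : Symmetric I) (hirr : Irreflexive I) :
    ∀ (l : List A) (z : TraceMonoid A I), PrefAll (mkL I l) z → mkL I l ∣ z := by
  intro l
  induction l with
  | nil => intro z _; rw [mkL_nil]; exact one_dvd z
  | cons a t ih =>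
    intro z h
    obtain ⟨z', rfl⟩ : ∃ z', z = trOf I a * z' := by
      apply exists_of_head hsym hirr
      intro p hp hpa
      have := h hp
      rw [pT_mkL, List.filter_cons, if_pos hpa] at this
      exact List.IsPrefix.trans ⟨_, rfl⟩ this
    have ht : PrefAll (mkL I t) z' := by
      intro p hp
      have := h hp
      rw [pT_mkL, pT_trOf_mul, List.filter_cons] at this
      rw [pT_mkL]
      by_cases hpa : p a
      · rw [if_pos hpa, if_pos hpa] at this
        exact (List.cons_prefix_cons.mp this).2
      · rw [if_neg hpa, if_neg hpa, List.nil_append] at this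
        exact this
    obtain ⟨c, hc⟩ := ih z' ht
    exact ⟨c, by rw [mkL_cons, hc, mul_assoc]⟩

theorem dvd_iff_prefAll (hsym : Symmetric I) (hirr : Irreflexive I)
    {x z : TraceMonoid A I} : x ∣ z ↔ PrefAll x z := by
  constructor
  · exact prefAll_of_dvd
  · intro h
    obtain ⟨l, rfl⟩ := mkL_surjective x
    exact dvd_of_prefAll hsym hirr l z h

/-- Left cancellation of a letter. -/
theorem trOf_mul_left_cancel (hsym : Symmetric I) (hirr : Irreflexive I) {a : A}
    {s t : TraceMonoid A I} (h : trOf I a * s = trOf I a * t) : s = t := by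
  have h1 : s ∣ t := (dvd_iff_prefAll hsym hirr).mpr
    (fun p hp => (pT_eq_of_trOf_mul_eq h hp) ▸ List.prefix_refl _)
  have h2 : t ∣ s := (dvd_iff_prefAll hsym hirr).mpr
    (fun p hp => (pT_eq_of_trOf_mul_eq h hp) ▸ List.prefix_refl _)
  exact trDvd_antisymm h1 h2

/-- If all letters of `w` are independent of `a` and `mkL w ∣ a * v`, then `mkL w ∣ v`. -/
theorem dvd_of_dvd_trOf_mul (hsym : Symmetric I) (hirr : Irreflexive I) {a : A}
    {w : List A} (hw : ∀ b ∈ w, I a b) {v : TraceMonoid A I}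
    (h : mkL I w ∣ trOf I a * v) : mkL I w ∣ v := by
  apply dvd_of_prefAll hsym hirr
  intro p hp
  have hpre := prefAll_of_dvd h hp
  rw [pT_trOf_mul] at hpre
  by_cases hpa : p a
  · rw [if_pos hpa] at hpre
    have hnil : pT hp (mkL I w) = [] := by
      rw [pT_mkL]
      cases hf : w.filter p with
      | nil => rfl
      | cons e r =>
        exfalso
        rw [pT_mkL, hf] at hpre
        have hea : e = a := (List.cons_prefix_cons.mp hpre).1
        have hew : e ∈ w := List.mem_of_mem_filter (by rw [hf]; exact List.mem_cons_self)
        exact hirr a (hea ▸ hw e hew)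
    rw [hnil]
    exact List.nil_prefix
  · rw [if_neg hpa, List.nil_append] at hpre
    exact hpre

theorem lub_exists_aux (hsym : Symmetric I) (hirr : Irreflexive I) :
    ∀ (l : List A) (y u : TraceMonoid A I), mkL I l ∣ u → y ∣ u →
      ∃ z, IsLubDvd (mkL I l) y z := by
  intro l
  induction l with
  | nil =>
    intro y u _ _
    exact ⟨y, by rw [mkL_nil]; exact one_dvd y, dvd_rfl, fun w _ h => h⟩
  | cons a t ih =>
    intro y u hxu hyu
    obtain ⟨u₁, rfl⟩ : ∃ u₁, u = trOf I a * u₁ := by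
      obtain ⟨c, rfl⟩ := hxu
      exact ⟨mkL I t * c, by rw [mkL_cons, mul_assoc]⟩
    have hxu₁ : mkL I t ∣ u₁ := by
      obtain ⟨c, hc⟩ := hxu
      rw [mkL_cons, mul_assoc] at hc
      exact ⟨c, trOf_mul_left_cancel hsym hirr hc⟩
    by_cases hay : trOf I a ∣ y
    · obtain ⟨y₁, rfl⟩ := hay
      have hy₁ : y₁ ∣ u₁ := by
        obtain ⟨c, hc⟩ := hyu
        rw [mul_assoc] at hc
        exact ⟨c, trOf_mul_left_cancel hsym hirr hc⟩
      obtain ⟨z₁, hz₁⟩ := ih y₁ u₁ hxu₁ hy₁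
      refine ⟨trOf I a * z₁, ?_, ?_, ?_⟩
      · obtain ⟨c, hc⟩ := hz₁.1
        exact ⟨c, by rw [mkL_cons, mul_assoc, ← hc]⟩
      · obtain ⟨c, hc⟩ := hz₁.2.1
        exact ⟨c, by rw [mul_assoc, ← hc]⟩
      · intro w hw1 hw2
        obtain ⟨w₁, rfl⟩ : ∃ w₁, w = trOf I a * w₁ := by
          obtain ⟨c, rfl⟩ := hw2
          exact ⟨y₁ * c, by rw [mul_assoc]⟩
        have hw1' : mkL I t ∣ w₁ := by
          obtain ⟨c, hc⟩ := hw1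
          rw [mkL_cons, mul_assoc] at hc
          exact ⟨c, trOf_mul_left_cancel hsym hirr hc⟩
        have hw2' : y₁ ∣ w₁ := by
          obtain ⟨c, hc⟩ := hw2
          rw [mul_assoc] at hc
          exact ⟨c, trOf_mul_left_cancel hsym hirr hc⟩
        obtain ⟨c, hc⟩ := hz₁.2.2 w₁ hw1' hw2'
        exact ⟨c, by rw [mul_assoc, ← hc]⟩
    · -- `a` does not divide `y`: all letters of `y` are independent of `a`.
      obtain ⟨m, rfl⟩ := mkL_surjective y
      have ham : a ∉ m := by
        intro ham
        apply hay
        obtain ⟨z', hz'⟩ : ∃ z', mkL I m = trOf I a * z' := by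
          apply exists_of_head hsym hirr
          intro p hp hpa
          have hpre := prefAll_of_dvd hyu hp
          rw [pT_mkL, pT_trOf_mul, if_pos hpa] at hpre
          cases hf : m.filter p with
          | nil =>
            exfalso
            have : a ∈ m.filter p := List.mem_filter.mpr ⟨ham, hpa⟩
            rw [hf] at this; cases this
          | cons e r =>
            rw [hf] at hpre
            have hea : e = a := (List.cons_prefix_cons.mp hpre).1
            rw [pT_mkL, hf, hea]
            exact ⟨r, rfl⟩
        exact ⟨z', hz'⟩
      have hind : ∀ b ∈ m, I a b := by
        intro b hb
        by_contra hIab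
        have hp := blocking_pair hsym hirr hIab
        have hpre := prefAll_of_dvd hyu hp
        rw [pT_mkL, pT_trOf_mul, if_pos (by simp)] at hpre
        have hbf : b ∈ m.filter (fun c => decide (c = a ∨ c = b)) :=
          List.mem_filter.mpr ⟨hb, by simp⟩
        cases hf : m.filter (fun c => decide (c = a ∨ c = b)) with
        | nil => rw [hf] at hbf; cases hbf
        | cons e r =>
          rw [hf] at hpre
          have hea : e = a := (List.cons_prefix_cons.mp hpre).1
          have hem : e ∈ m := List.mem_of_mem_filter (by rw [hf]; exact List.mem_cons_self)
          exact ham (hea ▸ hem)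
      have hyu₁ : mkL I m ∣ u₁ := dvd_of_dvd_trOf_mul hsym hirr hind hyu
      obtain ⟨z₁, hz₁⟩ := ih (mkL I m) u₁ hxu₁ hyu₁
      refine ⟨trOf I a * z₁, ?_, ?_, ?_⟩
      · obtain ⟨c, hc⟩ := hz₁.1
        exact ⟨c, by rw [mkL_cons, mul_assoc, ← hc]⟩
      · obtain ⟨c, hc⟩ := hz₁.2.1
        refine ⟨trOf I a * c, ?_⟩
        rw [hc, ← mul_assoc, trOf_mul_comm hind, mul_assoc]
      · intro w hw1 hw2
        obtain ⟨w₁, rfl⟩ : ∃ w₁, w = trOf I a * w₁ := by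
          obtain ⟨c, rfl⟩ := hw1
          rw [mkL_cons, mul_assoc]
          exact ⟨mkL I t * c, rfl⟩
        have hw1' : mkL I t ∣ w₁ := by
          obtain ⟨c, hc⟩ := hw1
          rw [mkL_cons, mul_assoc] at hc
          exact ⟨c, trOf_mul_left_cancel hsym hirr hc⟩
        have hw2' : mkL I m ∣ w₁ := dvd_of_dvd_trOf_mul hsym hirr hind hw2
        obtain ⟨c, hc⟩ := hz₁.2.2 w₁ hw1' hw2'
        exact ⟨c, by rw [mul_assoc, ← hc]⟩

theorem lub_exists (hsym : Symmetric I) (hirr : Irreflexive I) (x y : TraceMonoid A I)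
    (h : ∃ u, x ∣ u ∧ y ∣ u) : ∃ z, IsLubDvd x y z := by
  obtain ⟨u, hxu, hyu⟩ := h
  obtain ⟨l, rfl⟩ := mkL_surjective x
  exact lub_exists_aux hsym hirr l y u hxu hyu

end Stmt5Aux3
section Stmt5Aux4

variable {A : Type*} {I : A → A → Prop}

theorem glb_exists [Finite A] (hsym : Symmetric I) (hirr : Irreflexive I)
    (x y : TraceMonoid A I) : ∃ g, IsGlbDvd x y g := by
  set D : Set (TraceMonoid A I) := {g | g ∣ x ∧ g ∣ y} with hD
  have hfin : D.Finite := by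
    apply Set.Finite.subset ((List.finite_length_le (α := A) (n := trLen x)).image (mkL I))
    intro g hg
    obtain ⟨l, rfl⟩ := mkL_surjective g
    exact ⟨l, by rw [Set.mem_setOf_eq, ← trLen_mkL (I := I) l]; exact trLen_le_of_dvd hg.1, rfl⟩
  obtain ⟨g, hgD, hmax⟩ := Set.Finite.exists_maximalFor trLen D hfin ⟨1, one_dvd x, one_dvd y⟩
  refine ⟨g, hgD.1, hgD.2, ?_⟩
  intro w hwx hwy
  obtain ⟨l, hl⟩ := mkL_surjective g
  obtain ⟨z, hz⟩ := lub_exists_aux hsym hirr l w x (hl ▸ hgD.1) hwx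
  rw [← hl] at hz
  have hzD : z ∈ D := ⟨hz.2.2 x hgD.1 hwx, hz.2.2 y hgD.2 hwy⟩
  have hgz : g ∣ z := hz.1
  have : trLen g = trLen z := le_antisymm (trLen_le_of_dvd hgz) (hmax hzD (trLen_le_of_dvd hgz))
  have : g = z := eq_of_dvd_of_len_le hgz (le_of_eq this.symm)
  exact this ▸ hz.2.1

theorem listProd_eq_mkL (l : List A) : listProd I l = mkL I l := by
  induction l with
  | nil => simp [listProd, mkL_nil]
  | cons a t ih => rw [listProd, List.map_cons, List.prod_cons, mkL_cons, ← ih]; rfl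

theorem cliqueList_commute {l : List A} (h : IsCliqueList I l) :
    (l.map (trOf I)).Pairwise Commute := by
  refine List.Pairwise.map _ (fun a b hab => ?_) h
  exact trOf_comm hab.2

theorem mkL_perm {l l' : List A} (h : List.Perm l l') (hc : IsCliqueList I l) :
    mkL I l = mkL I l' := by
  rw [← listProd_eq_mkL, ← listProd_eq_mkL, listProd, listProd]
  exact List.Perm.prod_eq' (h.map (trOf I)) (cliqueList_commute hc)

theorem cliqueList_sublist {l l' : List A} (h : List.Sublist l' l) (hc : IsCliqueList I l) :
    IsCliqueList I l' := List.Pairwise.sublist h hc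

theorem cliqueList_nodup {l : List A} (hc : IsCliqueList I l) : l.Nodup :=
  List.Pairwise.imp (fun h => h.1) hc

/-- The projection of a clique on a blocking predicate has length at most one. -/
theorem clique_filter_cases {l : List A} (hc : IsCliqueList I l) {p : A → Bool}
    (hp : Blocking I p) : l.filter p = [] ∨ ∃ c, l.filter p = [c] := by
  cases hf : l.filter p with
  | nil => exact Or.inl rfl
  | cons c s =>
    cases hs : s with
    | nil => exact Or.inr ⟨c, rfl⟩
    | cons d s' =>
      exfalso
      have hpf : (l.filter p).Pairwise fun a b => a ≠ b ∧ I a b :=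
        List.Pairwise.sublist (List.filter_sublist) hc
      rw [hf, hs] at hpf
      have hcd : c ≠ d ∧ I c d := (List.pairwise_cons.mp hpf).1 d (List.mem_cons_self)
      have hcp : p c := List.of_mem_filter (by rw [hf]; exact List.mem_cons_self)
      have hdp : p d := List.of_mem_filter (a := d)
        (by rw [hf, hs]; exact List.mem_cons_of_mem _ List.mem_cons_self)
      exact hp hcd.2 hcp hdp

theorem clique_glb (hsym : Symmetric I) (hirr : Irreflexive I)
    (l₁ l₂ : List A) (h₁ : IsCliqueList I l₁) (h₂ : IsCliqueList I l₂)
    (q : A → Bool) (hq : ∀ a, q a = true ↔ a ∈ l₂) :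
    IsGlbDvd (mkL I l₁) (mkL I l₂) (mkL I (l₁.filter q)) := by
  set m := l₁.filter q with hm
  have hmsub : List.Sublist m l₁ := List.filter_sublist
  have hmc : IsCliqueList I m := cliqueList_sublist hmsub h₁
  refine ⟨?_, ?_, ?_⟩
  · -- m divides l₁
    have hperm : List.Perm (l₁.filter q ++ l₁.filter (fun a => !q a)) l₁ := List.filter_append_perm q l₁
    have := mkL_perm hperm.symm h₁
    rw [this, mkL_append]
    exact Dvd.intro _ rfl
  · -- m divides l₂
    have hnd : m.Nodup := cliqueList_nodup hmc
    have hsub : m ⊆ l₂ := fun a ha => (hq a).mp (List.of_mem_filter ha)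
    obtain ⟨m', hm'm, hm'l₂⟩ := hnd.subperm hsub
    obtain ⟨r, hr⟩ := hm'l₂.exists_perm_append
    have h1 : mkL I l₂ = mkL I (m' ++ r) := mkL_perm hr h₂
    have h2 : mkL I m' = mkL I m :=
      mkL_perm hm'm
        ((List.Perm.pairwise_iff (fun h => ⟨Ne.symm h.1, hsym h.2⟩) hm'm).mpr hmc)
    rw [h1, mkL_append, h2]
    exact Dvd.intro _ rfl
  · -- minimality
    intro w hw1 hw2
    apply (dvd_iff_prefAll hsym hirr).mpr
    intro p hp
    have hpre1 := prefAll_of_dvd hw1 hp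
    have hpre2 := prefAll_of_dvd hw2 hp
    rw [pT_mkL] at hpre1 hpre2 ⊢
    cases hw : pT hp w with
    | nil => exact List.nil_prefix
    | cons e s =>
      rw [hw] at hpre1 hpre2
      -- From hpre1 : filter p l₁ has head e, and length ≤ 1
      have h1 : l₁.filter p = [e] ∧ s = [] := by
        rcases clique_filter_cases h₁ hp with hnil | ⟨c, hc⟩
        · rw [hnil] at hpre1
          exact absurd (List.prefix_nil.mp hpre1) (by simp)
        · rw [hc] at hpre1
          obtain ⟨hec, hsn⟩ := List.cons_prefix_cons.mp hpre1
          exact ⟨by rw [hc, hec], List.prefix_nil.mp hsn⟩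
      have h2 : l₂.filter p = [e] := by
        rcases clique_filter_cases h₂ hp with hnil | ⟨c, hc⟩
        · rw [hnil] at hpre2
          exact absurd (List.prefix_nil.mp hpre2) (by simp)
        · rw [hc] at hpre2
          obtain ⟨hec, _⟩ := List.cons_prefix_cons.mp hpre2
          rw [hc, hec]
      -- e ∈ l₁, e ∈ l₂, p e
      have hel₁ : e ∈ l₁ := List.mem_of_mem_filter (by rw [h1.1]; exact List.mem_cons_self)
      have hel₂ : e ∈ l₂ := List.mem_of_mem_filter (by rw [h2]; exact List.mem_cons_self)
      have hpe : p e = true := List.of_mem_filter (by rw [h1.1]; exact List.mem_cons_self)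
      have hem : e ∈ m := List.mem_filter.mpr ⟨hel₁, (hq e).mpr hel₂⟩
      have hef : e ∈ m.filter p := List.mem_filter.mpr ⟨hem, hpe⟩
      rcases clique_filter_cases hmc hp with hnil | ⟨c, hc⟩
      · rw [hnil] at hef; cases hef
      · rw [hc] at hef ⊢
        have : e = c := by simpa using hef
        rw [h1.2, this]

end Stmt5Aux4


/-- any two traces with a common upper bound (for left divisibility)
have a least upper bound; any two traces have a greatest lower bound; and for two
cliques the greatest lower bound is the clique given by the intersection of their
sets of letters. -/
theorem stmt5 {A : Type*} [Fintype A] [DecidableEq A] {I : A → A → Prop}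
    (hsym : Symmetric I) (hirr : Irreflexive I) :
    (∀ x y : TraceMonoid A I, (∃ u, x ∣ u ∧ y ∣ u) → ∃ z, IsLubDvd x y z) ∧
    (∀ x y : TraceMonoid A I, ∃ g, IsGlbDvd x y g) ∧
    (∀ l₁ l₂ : List A, IsCliqueList I l₁ → IsCliqueList I l₂ →
      IsGlbDvd (listProd I l₁) (listProd I l₂)
        (listProd I (l₁.filter fun a => decide (a ∈ l₂)))) := by
  refine ⟨fun x y h => lub_exists hsym hirr x y h, fun x y => glb_exists hsym hirr x y, ?_⟩
  intro l₁ l₂ h₁ h₂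
  rw [listProd_eq_mkL, listProd_eq_mkL, listProd_eq_mkL]
  exact clique_glb hsym hirr l₁ l₂ h₁ h₂ _ (fun a => by simp)
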